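/- arXiv:2209.04848 — 5 statements merged into one kernel-verified Lean document; each statement's English description precedes it below -/
import Mathlib

section
/- Let M, N be positive integers, let A, B ∈ ℂ^{M×N} be complex matrices such that B Bᴴ is positive definite. Define the (N+M)×(N+M) block matrix C = [[I_N, Aᴴ], [A, A Aᴴ + B Bᴴ]] and the (N+M)×N matrix E = [I_N; 0_{M×N}] (identity stacked on zeros). Then det(I_N + Aᴴ (B Bᴴ)⁻¹ A) = det(Eᴴ C⁻¹ E). -/
open Matrix
open scoped ComplexOrder

/-- Lemma 1 of the paper: for `A, B ∈ ℂ^{M×N}` with `B Bᴴ` positive definite,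
`det (I_N + Aᴴ (B Bᴴ)⁻¹ A) = det (Eᴴ C⁻¹ E)` where
`C = [[I_N, Aᴴ], [A, A Aᴴ + B Bᴴ]]` and `E = [I_N; 0]`. -/
theorem stmt_0 (M N : ℕ) (hM : 0 < M) (hN : 0 < N)
    (A B : Matrix (Fin M) (Fin N) ℂ)
    (hB : (B * Bᴴ).PosDef)
    (C : Matrix (Fin N ⊕ Fin M) (Fin N ⊕ Fin M) ℂ)
    (hC : C = fromBlocks (1 : Matrix (Fin N) (Fin N) ℂ) Aᴴ A (A * Aᴴ + B * Bᴴ))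
    (E : Matrix (Fin N ⊕ Fin M) (Fin N) ℂ)
    (hE : E = Matrix.of (Sum.elim (1 : Matrix (Fin N) (Fin N) ℂ)
      (0 : Matrix (Fin M) (Fin N) ℂ))) :
    ((1 : Matrix (Fin N) (Fin N) ℂ) + Aᴴ * (B * Bᴴ)⁻¹ * A).det
      = (Eᴴ * C⁻¹ * E).det := by
  set S : Matrix (Fin M) (Fin M) ℂ := B * Bᴴ with hS
  have hdet : IsUnit S.det := hB.det_pos.ne'.isUnit
  have hSi : S * S⁻¹ = 1 := mul_nonsing_inv _ hdet
  have hSi' : S⁻¹ * S = 1 := nonsing_inv_mul _ hdet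
  have hEr : E = fromRows (1 : Matrix (Fin N) (Fin N) ℂ) 0 := by rw [hE]; rfl
  have hCinv : C⁻¹ = fromBlocks (1 + Aᴴ * S⁻¹ * A) (-(Aᴴ * S⁻¹)) (-(S⁻¹ * A)) S⁻¹ := by
    apply inv_eq_right_inv
    rw [hC, fromBlocks_multiply]
    have h1 : (1 : Matrix (Fin N) (Fin N) ℂ) * (1 + Aᴴ * S⁻¹ * A) + Aᴴ * -(S⁻¹ * A) = 1 := by
      simp [Matrix.mul_assoc]
    have h2 : (1 : Matrix (Fin N) (Fin N) ℂ) * -(Aᴴ * S⁻¹) + Aᴴ * S⁻¹ = 0 := by simp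
    have h3 : A * (1 + Aᴴ * S⁻¹ * A) + (A * Aᴴ + S) * -(S⁻¹ * A) = 0 := by
      rw [Matrix.mul_add, Matrix.mul_one, Matrix.mul_neg, Matrix.add_mul, ← Matrix.mul_assoc S, hSi]
      simp [Matrix.mul_assoc]
      abel
    have h4 : A * -(Aᴴ * S⁻¹) + (A * Aᴴ + S) * S⁻¹ = 1 := by
      rw [Matrix.mul_neg, Matrix.add_mul, hSi]
      simp [Matrix.mul_assoc]
    rw [h1, h2, h3, h4, ← fromBlocks_one]
  rw [hCinv, hEr, conjTranspose_fromRows_eq_fromCols_conjTranspose,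
    fromCols_mul_fromBlocks, fromCols_mul_fromRows]
  simp
end

section
/- Let E ∈ ℂ^{m×n} be a matrix of full column rank (the linear map x ↦ E x is injective). Then the function C ↦ log(Re det(Eᴴ C⁻¹ E)) is convex on the convex set of m×m Hermitian positive definite complex matrices (viewed as a subset of the real vector space of m×m complex matrices). -/
open Matrix
open scoped ComplexOrder

section Helpers

open scoped MatrixOrder

variable {k l : ℕ}

private lemma gramPD {M : Matrix (Fin k) (Fin k) ℂ} (hM : M.PosDef)
    (B : Matrix (Fin k) (Fin l) ℂ) (hB : Function.Injective B.mulVec) :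
    (Bᴴ * M * B).PosDef := by
  refine Matrix.PosDef.of_dotProduct_mulVec_pos (isHermitian_conjTranspose_mul_mul B hM.1) fun x hx => ?_
  have hBx : B *ᵥ x ≠ 0 := fun h => hx (hB (h.trans (B.mulVec_zero).symm))
  simpa only [star_mulVec, dotProduct_mulVec, vecMul_vecMul] using hM.dotProduct_mulVec_pos hBx

private lemma detRePos' {M : Matrix (Fin k) (Fin k) ℂ} (hM : M.PosDef) :
    0 < M.det.re ∧ M.det = (M.det.re : ℂ) := by
  have h := hM.det_pos
  rw [Complex.lt_def] at h
  exact ⟨h.1, Complex.ext rfl h.2.symm⟩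

private lemma det_one_add {K : Matrix (Fin k) (Fin k) ℂ} (hK : K.PosSemidef) :
    ∃ p : ℝ, 1 ≤ p ∧ ((1 : Matrix (Fin k) (Fin k) ℂ) + K).det = (p : ℂ) := by
  have hH := hK.isHermitian
  set U : Matrix (Fin k) (Fin k) ℂ := (hH.eigenvectorUnitary : Matrix (Fin k) (Fin k) ℂ)
  set D : Matrix (Fin k) (Fin k) ℂ := diagonal (RCLike.ofReal ∘ hH.eigenvalues)
  have hspec : K = U * D * star U := by
    rw [hH.spectral_theorem, Unitary.conjStarAlgAut_apply]
  have hU : star U * U = 1 := (Matrix.mem_unitaryGroup_iff').mp hH.eigenvectorUnitary.2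
  have h1 : (1 : Matrix (Fin k) (Fin k) ℂ) = U * 1 * star U := by
    rw [Matrix.mul_one]
    exact ((Matrix.mem_unitaryGroup_iff).mp hH.eigenvectorUnitary.2).symm
  have hsum : (1 : Matrix (Fin k) (Fin k) ℂ) + K = U * (1 + D) * star U := by
    rw [Matrix.mul_add, Matrix.add_mul, ← h1, ← hspec]
  refine ⟨∏ i, (1 + hH.eigenvalues i), ?_, ?_⟩
  · have : ∏ i : Fin k, (1:ℝ) ≤ ∏ i, (1 + hH.eigenvalues i) := by
      refine Finset.prod_le_prod (fun i _ => zero_le_one) fun i _ => ?_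
      linarith [hK.eigenvalues_nonneg i]
    simpa using this
  · rw [hsum, Matrix.det_mul, Matrix.det_mul]
    have : U.det * ((1 : Matrix (Fin k) (Fin k) ℂ) + D).det * (star U).det
        = (star U).det * U.det * ((1 : Matrix (Fin k) (Fin k) ℂ) + D).det := by ring
    rw [this, ← Matrix.det_mul, hU, Matrix.det_one, one_mul]
    have hdiag : (1 : Matrix (Fin k) (Fin k) ℂ) + D
        = diagonal (fun i => 1 + (hH.eigenvalues i : ℂ)) := by
      rw [← Matrix.diagonal_one, Matrix.diagonal_add]
      rfl
    rw [hdiag, Matrix.det_diagonal]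
    push_cast
    rfl

private lemma det_mono {A N : Matrix (Fin k) (Fin k) ℂ} (hA : A.PosDef) (hN : N.PosSemidef) :
    A.det.re ≤ (A + N).det.re := by
  set S := CFC.sqrt A with hSdef
  have hSS : S * S = A := CFC.sqrt_mul_sqrt_self A hA.posSemidef.nonneg
  have hSps : S.PosSemidef := (CFC.sqrt_nonneg A).posSemidef
  have hdetS : S.det * S.det = A.det := by rw [← Matrix.det_mul, hSS]
  have hAdet : A.det ≠ 0 := ne_of_gt hA.det_pos
  have hSu : IsUnit S.det :=
    isUnit_iff_ne_zero.mpr fun h => hAdet (by rw [← hdetS, h, zero_mul])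
  have hSinv : S * S⁻¹ = 1 := Matrix.mul_nonsing_inv S hSu
  have hSinvH : (S⁻¹)ᴴ = S⁻¹ := hSps.isHermitian.inv.eq
  set K := S⁻¹ * N * S⁻¹ with hKdef
  have hKps : K.PosSemidef := by
    have := hN.conjTranspose_mul_mul_same (B := S⁻¹)
    rwa [hSinvH] at this
  have hdecomp : A + N = S * (1 + K) * S := by
    rw [Matrix.mul_add, Matrix.add_mul, Matrix.mul_one, hSS, hKdef]
    congr 1
    have : S * (S⁻¹ * N * S⁻¹) * S = (S * S⁻¹) * N * (S⁻¹ * S) := by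
      simp only [Matrix.mul_assoc]
    rw [this, hSinv, Matrix.nonsing_inv_mul S hSu, Matrix.mul_one, Matrix.one_mul]
  obtain ⟨p, hp1, hpdet⟩ := det_one_add hKps
  have hdet : (A + N).det = A.det * p := by
    rw [hdecomp, Matrix.det_mul, Matrix.det_mul, hpdet]
    ring_nf
    rw [sq, hdetS]
    ring
  obtain ⟨hare, haeq⟩ := detRePos' hA
  rw [hdet, haeq]
  rw [← Complex.ofReal_mul]
  simp only [Complex.ofReal_re]
  nlinarith

private lemma log_det_le_trace {M : Matrix (Fin k) (Fin k) ℂ} (hM : M.PosDef) :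
    Real.log M.det.re ≤ M.trace.re - k := by
  have hH := hM.isHermitian
  set U : Matrix (Fin k) (Fin k) ℂ := (hH.eigenvectorUnitary : Matrix (Fin k) (Fin k) ℂ)
  set D : Matrix (Fin k) (Fin k) ℂ := diagonal (RCLike.ofReal ∘ hH.eigenvalues)
  have hU : star U * U = 1 := (Matrix.mem_unitaryGroup_iff').mp hH.eigenvectorUnitary.2
  have htr : M.trace = ∑ i, (hH.eigenvalues i : ℂ) := by
    conv_lhs => rw [hH.spectral_theorem, Unitary.conjStarAlgAut_apply]
    rw [Matrix.trace_mul_cycle, hU, Matrix.one_mul, Matrix.trace_diagonal]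
    rfl
  have htrre : M.trace.re = ∑ i, hH.eigenvalues i := by
    rw [htr]
    simp
  have hdet : M.det.re = ∏ i, hH.eigenvalues i := by
    have := hH.det_eq_prod_eigenvalues
    rw [this]
    norm_cast
  rw [hdet, htrre]
  have hpos : ∀ i ∈ Finset.univ, (0:ℝ) < hH.eigenvalues i := fun i _ => hM.eigenvalues_pos i
  rw [Real.log_prod (fun i hi => (hpos i hi).ne')]
  have hle : ∀ i ∈ Finset.univ, Real.log (hH.eigenvalues i) ≤ hH.eigenvalues i - 1 :=
    fun i hi => Real.log_le_sub_one_of_pos (hpos i hi)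
  calc ∑ i, Real.log (hH.eigenvalues i) ≤ ∑ i, (hH.eigenvalues i - 1) :=
        Finset.sum_le_sum hle
    _ = (∑ i, hH.eigenvalues i) - k := by
        rw [Finset.sum_sub_distrib]
        simp

private lemma log_det_le {A B : Matrix (Fin k) (Fin k) ℂ} (hA : A.PosDef) (hB : B.PosDef) :
    Real.log A.det.re ≤ Real.log B.det.re + (B⁻¹ * A).trace.re - k := by
  set S := CFC.sqrt B with hSdef
  have hSS : S * S = B := CFC.sqrt_mul_sqrt_self B hB.posSemidef.nonneg
  have hSps : S.PosSemidef := (CFC.sqrt_nonneg B).posSemidef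
  have hdetS : S.det * S.det = B.det := by rw [← Matrix.det_mul, hSS]
  have hBdet : B.det ≠ 0 := ne_of_gt hB.det_pos
  have hSu : IsUnit S.det :=
    isUnit_iff_ne_zero.mpr fun h => hBdet (by rw [← hdetS, h, zero_mul])
  have hSne : S.det ≠ 0 := isUnit_iff_ne_zero.mp hSu
  have hsinv : (S⁻¹).det = S.det⁻¹ := by
    rw [Matrix.det_nonsing_inv, Ring.inverse_eq_inv']
  have hSinvu : IsUnit (S⁻¹).det := by
    rw [hsinv]
    exact isUnit_iff_ne_zero.mpr (inv_ne_zero hSne)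
  have hSinj : Function.Injective (S⁻¹).mulVec :=
    Matrix.mulVec_injective_iff_isUnit.mpr ((Matrix.isUnit_iff_isUnit_det _).mpr hSinvu)
  have hSinvH : (S⁻¹)ᴴ = S⁻¹ := hSps.isHermitian.inv.eq
  set M := S⁻¹ * A * S⁻¹ with hMdef
  have hMpd : M.PosDef := by
    have := gramPD hA S⁻¹ hSinj
    rwa [hSinvH] at this
  have hBinv : B⁻¹ = S⁻¹ * S⁻¹ := by rw [← hSS, Matrix.mul_inv_rev]
  have htr : (B⁻¹ * A).trace = M.trace := by
    rw [hBinv, hMdef, Matrix.trace_mul_cycle, Matrix.trace_mul_cycle]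
  have hdetM : M.det * B.det = A.det := by
    rw [hMdef, Matrix.det_mul, Matrix.det_mul, hsinv, ← hdetS]
    field_simp
  obtain ⟨hda, hea⟩ := detRePos' hA
  obtain ⟨hdb, heb⟩ := detRePos' hB
  obtain ⟨hdm, hem⟩ := detRePos' hMpd
  have hre : A.det.re = M.det.re * B.det.re := by
    have : ((A.det.re : ℂ)) = ((M.det.re * B.det.re : ℝ) : ℂ) := by
      push_cast
      rw [← hea, ← heb, ← hem, hdetM]
    exact_mod_cast this
  rw [hre, Real.log_mul (ne_of_gt hdm) (ne_of_gt hdb), htr]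
  have := log_det_le_trace hMpd
  linarith

private lemma det_cs {A B : Matrix (Fin k) (Fin l) ℂ} (hA : Function.Injective A.mulVec)
    (hN : (Aᴴ * B).PosDef) :
    ((Aᴴ * B).det.re) ^ 2 ≤ (Aᴴ * A).det.re * (Bᴴ * B).det.re := by
  set N := Aᴴ * B with hNdef
  have hG : (Aᴴ * A).PosDef := by
    have := gramPD Matrix.PosDef.one A hA
    rwa [Matrix.mul_one] at this
  set G := Aᴴ * A with hGdef
  have hGdet : G.det ≠ 0 := ne_of_gt hG.det_pos
  have hGu : IsUnit G.det := isUnit_iff_ne_zero.mpr hGdet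
  have hGinv : G⁻¹.PosDef := hG.inv
  have hGinvH : (G⁻¹)ᴴ = G⁻¹ := hG.isHermitian.inv.eq
  have hNu : IsUnit N.det := isUnit_iff_ne_zero.mpr (ne_of_gt hN.det_pos)
  have hNinj : Function.Injective N.mulVec :=
    Matrix.mulVec_injective_iff_isUnit.mpr ((Matrix.isUnit_iff_isUnit_det _).mpr hNu)
  set T := Nᴴ * G⁻¹ * N with hTdef
  have hT : T.PosDef := gramPD hGinv N hNinj
  set P := A * G⁻¹ * Aᴴ with hPdef
  have hPH : Pᴴ = P := by
    rw [hPdef]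
    simp only [Matrix.conjTranspose_mul, Matrix.conjTranspose_conjTranspose, hGinvH]
    rw [Matrix.mul_assoc]
  have hPP : P * P = P := by
    rw [hPdef]
    calc A * G⁻¹ * Aᴴ * (A * G⁻¹ * Aᴴ) = A * (G⁻¹ * (Aᴴ * A) * G⁻¹) * Aᴴ := by
          simp only [Matrix.mul_assoc]
      _ = A * G⁻¹ * Aᴴ := by
          rw [← hGdef, Matrix.nonsing_inv_mul G hGu, Matrix.one_mul]
  set Q := (1 : Matrix (Fin k) (Fin k) ℂ) - P with hQdef
  have hQH : Qᴴ = Q := by rw [hQdef, Matrix.conjTranspose_sub, Matrix.conjTranspose_one, hPH]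
  have hdecomp : Bᴴ * B = T + (Q * B)ᴴ * (Q * B) := by
    have hQQ : Qᴴ * Q = Q := by
      rw [hQH, hQdef]
      simp only [Matrix.sub_mul, Matrix.mul_sub, Matrix.one_mul, Matrix.mul_one, hPP]
      abel
    rw [Matrix.conjTranspose_mul, Matrix.mul_assoc, ← Matrix.mul_assoc Qᴴ, hQQ]
    rw [hQdef, Matrix.sub_mul, Matrix.mul_sub, Matrix.one_mul]
    rw [hTdef, hNdef, hPdef]
    simp only [Matrix.conjTranspose_mul, Matrix.conjTranspose_conjTranspose, Matrix.mul_assoc]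
    abel
  have hR : ((Q * B)ᴴ * (Q * B)).PosSemidef := Matrix.posSemidef_conjTranspose_mul_self _
  have hTle : T.det.re ≤ (Bᴴ * B).det.re := by
    rw [hdecomp]
    exact det_mono hT hR
  have hTdet : T.det * G.det = N.det * N.det := by
    rw [hTdef, Matrix.det_mul, Matrix.det_mul, hN.isHermitian.eq, Matrix.det_nonsing_inv,
      Ring.inverse_eq_inv']
    field_simp
  obtain ⟨hdn, hen⟩ := detRePos' hN
  obtain ⟨hdg, heg⟩ := detRePos' hG
  obtain ⟨hdt, het⟩ := detRePos' hT
  have hre : T.det.re * G.det.re = N.det.re * N.det.re := by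
    have : ((T.det.re * G.det.re : ℝ) : ℂ) = ((N.det.re * N.det.re : ℝ) : ℂ) := by
      push_cast
      rw [← hen, ← het, ← heg, hTdet]
    exact_mod_cast this
  nlinarith [hTle]

end Helpers

/-- Convexity claim of Lemma 2: for `E` of full column rank, the function
`C ↦ log (Re det (Eᴴ C⁻¹ E))` is convex on the set of Hermitian positive definite
matrices (a subset of the real vector space of `m×m` complex matrices). -/
theorem stmt_5 (m n : ℕ) (E : Matrix (Fin m) (Fin n) ℂ)
    (hE : Function.Injective E.mulVec) :
    ConvexOn ℝ {C : Matrix (Fin m) (Fin m) ℂ | C.PosDef}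
      (fun C => Real.log ((Eᴴ * C⁻¹ * E).det.re)) := by
  -- convexity of the set of PD matrices
  have hcombo : ∀ (C₁ C₂ : Matrix (Fin m) (Fin m) ℂ), C₁.PosDef → C₂.PosDef →
      ∀ (a b : ℝ), 0 ≤ a → 0 ≤ b → a + b = 1 → (a • C₁ + b • C₂).PosDef := by
    intro C₁ C₂ h₁ h₂ a b ha hb hab
    rcases eq_or_lt_of_le ha with ha0 | ha0
    · have hb1 : b = 1 := by linarith
      simpa [← ha0, hb1] using h₂
    rcases eq_or_lt_of_le hb with hb0 | hb0
    · have ha1 : a = 1 := by linarith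
      simpa [← hb0, ha1] using h₁
    refine Matrix.PosDef.of_dotProduct_mulVec_pos ?_ ?_
    · have e₁ : (a • C₁)ᴴ = a • C₁ := by
        rw [Matrix.conjTranspose_smul, star_trivial, h₁.isHermitian.eq]
      have e₂ : (b • C₂)ᴴ = b • C₂ := by
        rw [Matrix.conjTranspose_smul, star_trivial, h₂.isHermitian.eq]
      rw [IsHermitian, Matrix.conjTranspose_add, e₁, e₂]
    · intro x hx
      have q₁ := h₁.dotProduct_mulVec_pos hx
      have q₂ := h₂.dotProduct_mulVec_pos hx
      rw [Matrix.add_mulVec, dotProduct_add, Matrix.smul_mulVec,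
        Matrix.smul_mulVec, dotProduct_smul, dotProduct_smul]
      have hsa : (0:ℂ) < a • (star x ⬝ᵥ C₁ *ᵥ x) := by
        rw [Complex.real_smul]
        exact mul_pos (by exact_mod_cast ha0) q₁
      have hsb : (0:ℂ) < b • (star x ⬝ᵥ C₂ *ᵥ x) := by
        rw [Complex.real_smul]
        exact mul_pos (by exact_mod_cast hb0) q₂
      exact add_pos hsa hsb
  refine ⟨fun C₁ h₁ C₂ h₂ a b ha hb hab => hcombo C₁ C₂ h₁ h₂ a b ha hb hab, ?_⟩
  intro C₁ hC₁ C₂ hC₂ a b ha hb hab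
  simp only [Set.mem_setOf_eq] at hC₁ hC₂
  rcases eq_or_lt_of_le ha with ha0 | ha0
  · have hb1 : b = 1 := by linarith
    simp [← ha0, hb1]
  rcases eq_or_lt_of_le hb with hb0 | hb0
  · have ha1 : a = 1 := by linarith
    simp [← hb0, ha1]
  set C₀ := a • C₁ + b • C₂ with hC₀def
  have hC₀ : C₀.PosDef := hcombo C₁ C₂ hC₁ hC₂ a b ha hb hab
  have hC₀u : IsUnit C₀.det := isUnit_iff_ne_zero.mpr (ne_of_gt hC₀.det_pos)
  have hC₀invH : (C₀⁻¹)ᴴ = C₀⁻¹ := hC₀.isHermitian.inv.eq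
  set X := C₀⁻¹ * E with hXdef
  have hXinj : Function.Injective X.mulVec := by
    intro u v huv
    apply hE
    apply Matrix.mulVec_injective_iff_isUnit.mpr ((Matrix.isUnit_iff_isUnit_det _).mpr
      (by rw [Matrix.det_nonsing_inv, Ring.inverse_eq_inv']
          exact isUnit_iff_ne_zero.mpr (inv_ne_zero (ne_of_gt hC₀.det_pos))))
    simpa only [hXdef, ← Matrix.mulVec_mulVec] using huv
  set M₀ := Eᴴ * C₀⁻¹ * E with hM₀def
  have hM₀ : M₀.PosDef := gramPD hC₀.inv E hE
  have hM₀u : IsUnit M₀.det := isUnit_iff_ne_zero.mpr (ne_of_gt hM₀.det_pos)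
  set d₀ := M₀.det.re with hd₀def
  obtain ⟨hd₀pos, _⟩ := detRePos' hM₀
  -- the key pointwise bound
  have key : ∀ C : Matrix (Fin m) (Fin m) ℂ, C.PosDef →
      Real.log d₀ + n - (M₀⁻¹ * (Xᴴ * C * X)).trace.re
        ≤ Real.log ((Eᴴ * C⁻¹ * E).det.re) := by
    intro C hC
    open MatrixOrder in
    set S := CFC.sqrt C with hSdef
    have hSS : S * S = C := CFC.sqrt_mul_sqrt_self C hC.posSemidef.nonneg
    have hSps : S.PosSemidef := (CFC.sqrt_nonneg C).posSemidef
    have hdetS : S.det * S.det = C.det := by rw [← Matrix.det_mul, hSS]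
    have hCdet : C.det ≠ 0 := ne_of_gt hC.det_pos
    have hSu : IsUnit S.det :=
      isUnit_iff_ne_zero.mpr fun h => hCdet (by rw [← hdetS, h, zero_mul])
    have hSinvH : (S⁻¹)ᴴ = S⁻¹ := hSps.isHermitian.inv.eq
    have hSH : Sᴴ = S := hSps.isHermitian.eq
    set A₁ := S⁻¹ * E with hA₁def
    set B₁ := S * X with hB₁def
    have hA₁inj : Function.Injective A₁.mulVec := by
      intro u v huv
      apply hE
      apply Matrix.mulVec_injective_iff_isUnit.mpr ((Matrix.isUnit_iff_isUnit_det _).mpr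
        (by rw [Matrix.det_nonsing_inv, Ring.inverse_eq_inv']
            exact isUnit_iff_ne_zero.mpr (inv_ne_zero (isUnit_iff_ne_zero.mp hSu))))
      simpa only [hA₁def, ← Matrix.mulVec_mulVec] using huv
    have hAA : A₁ᴴ * A₁ = Eᴴ * C⁻¹ * E := by
      rw [hA₁def, Matrix.conjTranspose_mul, hSinvH, ← hSS, Matrix.mul_inv_rev]
      simp only [Matrix.mul_assoc]
    have hAB : A₁ᴴ * B₁ = M₀ := by
      rw [hA₁def, hB₁def, Matrix.conjTranspose_mul, hSinvH, hXdef, hM₀def]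
      calc Eᴴ * S⁻¹ * (S * (C₀⁻¹ * E)) = Eᴴ * (S⁻¹ * S) * (C₀⁻¹ * E) := by
            simp only [Matrix.mul_assoc]
        _ = Eᴴ * C₀⁻¹ * E := by
            rw [Matrix.nonsing_inv_mul S hSu, Matrix.mul_one, Matrix.mul_assoc]
    have hBB : B₁ᴴ * B₁ = Xᴴ * C * X := by
      rw [hB₁def, Matrix.conjTranspose_mul, hSH, ← hSS]
      simp only [Matrix.mul_assoc]
    have hW : (Xᴴ * C * X).PosDef := gramPD hC X hXinj
    have hGC : (Eᴴ * C⁻¹ * E).PosDef := gramPD hC.inv E hE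
    -- Cauchy–Schwarz step
    have hcs : d₀ ^ 2 ≤ (Eᴴ * C⁻¹ * E).det.re * (Xᴴ * C * X).det.re := by
      have := det_cs hA₁inj (by rw [hAB]; exact hM₀)
      rwa [hAA, hAB, hBB] at this
    -- trace step
    have htrace := log_det_le hW hM₀
    obtain ⟨hwpos, _⟩ := detRePos' hW
    obtain ⟨hgpos, _⟩ := detRePos' hGC
    have hlog : 2 * Real.log d₀ ≤ Real.log ((Eᴴ * C⁻¹ * E).det.re)
        + Real.log ((Xᴴ * C * X).det.re) := by
      have h1 : Real.log (d₀ ^ 2) ≤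
          Real.log ((Eᴴ * C⁻¹ * E).det.re * (Xᴴ * C * X).det.re) :=
        Real.log_le_log (by positivity) hcs
      rwa [Real.log_pow, Real.log_mul (ne_of_gt hgpos) (ne_of_gt hwpos)] at h1
    push_cast at htrace
    linarith
  -- value at the midpoint
  have hmid : Xᴴ * C₀ * X = M₀ := by
    rw [hXdef, Matrix.conjTranspose_mul, hC₀invH, hM₀def]
    calc Eᴴ * C₀⁻¹ * C₀ * (C₀⁻¹ * E) = Eᴴ * (C₀⁻¹ * C₀ * C₀⁻¹) * E := by
          simp only [Matrix.mul_assoc]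
      _ = Eᴴ * C₀⁻¹ * E := by
          rw [Matrix.nonsing_inv_mul C₀ hC₀u, Matrix.one_mul, Matrix.mul_assoc]
  have hlin : Xᴴ * C₀ * X = a • (Xᴴ * C₁ * X) + b • (Xᴴ * C₂ * X) := by
    rw [hC₀def]
    rw [Matrix.mul_add, Matrix.add_mul, Matrix.mul_smul, Matrix.mul_smul,
      Matrix.smul_mul, Matrix.smul_mul]
  have htr₀ : (M₀⁻¹ * (Xᴴ * C₀ * X)).trace.re = (n : ℝ) := by
    rw [hmid, Matrix.nonsing_inv_mul M₀ hM₀u, Matrix.trace_one]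
    simp
  have htr_lin : (M₀⁻¹ * (Xᴴ * C₀ * X)).trace.re
      = a * (M₀⁻¹ * (Xᴴ * C₁ * X)).trace.re + b * (M₀⁻¹ * (Xᴴ * C₂ * X)).trace.re := by
    rw [hlin, Matrix.mul_add, Matrix.mul_smul, Matrix.mul_smul, Matrix.trace_add,
      Matrix.trace_smul, Matrix.trace_smul]
    simp [Complex.real_smul]
  have hval : (fun C => Real.log ((Eᴴ * C⁻¹ * E).det.re)) C₀ = Real.log d₀ := by
    simp only [hM₀def, hd₀def]
  have k₁ := key C₁ hC₁
  have k₂ := key C₂ hC₂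
  simp only [smul_eq_mul]
  show Real.log d₀ ≤ a * Real.log ((Eᴴ * C₁⁻¹ * E).det.re)
      + b * Real.log ((Eᴴ * C₂⁻¹ * E).det.re)
  have expand : Real.log d₀
      = a * (Real.log d₀ + n - (M₀⁻¹ * (Xᴴ * C₁ * X)).trace.re)
      + b * (Real.log d₀ + n - (M₀⁻¹ * (Xᴴ * C₂ * X)).trace.re) := by
    have h1 : a * (Real.log d₀ + n) + b * (Real.log d₀ + n) = Real.log d₀ + n := by
      rw [← add_mul, hab, one_mul]
    have h2 := htr_lin
    rw [htr₀] at h2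
    ring_nf
    ring_nf at h1 h2
    linarith
  rw [expand]
  have l₁ : a * (Real.log d₀ + n - (M₀⁻¹ * (Xᴴ * C₁ * X)).trace.re)
      ≤ a * Real.log ((Eᴴ * C₁⁻¹ * E).det.re) :=
    mul_le_mul_of_nonneg_left k₁ ha
  have l₂ : b * (Real.log d₀ + n - (M₀⁻¹ * (Xᴴ * C₂ * X)).trace.re)
      ≤ b * Real.log ((Eᴴ * C₂⁻¹ * E).det.re) :=
    mul_le_mul_of_nonneg_left k₂ hb
  linarith
end

section
/- Let E ∈ ℂ^{m×n} have full column rank (the linear map x ↦ E x is injective), and let C and C_k be m×m Hermitian positive definite complex matrices. Define G = C_k⁻¹ E (Eᴴ C_k⁻¹ E)⁻¹ Eᴴ C_k⁻¹. Then log(Re det(Eᴴ C⁻¹ E)) ≥ log(Re det(Eᴴ C_k⁻¹ E)) − Re(Tr(G (C − C_k))). -/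
open Matrix
open scoped ComplexOrder

namespace Stmt6Aux

open scoped MatrixOrder

lemma posDef_conj {k l : ℕ} {M : Matrix (Fin k) (Fin k) ℂ} (hM : M.PosDef)
    (B : Matrix (Fin k) (Fin l) ℂ) (hB : Function.Injective B.mulVec) :
    (Bᴴ * M * B).PosDef := by
  refine PosDef.of_dotProduct_mulVec_pos (isHermitian_conjTranspose_mul_mul B hM.1) fun x hx => ?_
  have hBx : B *ᵥ x ≠ 0 := fun h => hx (hB (h.trans (B.mulVec_zero).symm))
  simpa only [star_mulVec, dotProduct_mulVec, vecMul_vecMul] using hM.dotProduct_mulVec_pos hBx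

lemma trace_re_eq {k : ℕ} {A : Matrix (Fin k) (Fin k) ℂ} (hA : A.IsHermitian) :
    A.trace.re = ∑ i, hA.eigenvalues i := by
  have h : A.trace = ∑ i, (hA.eigenvalues i : ℂ) := by
    conv_lhs => rw [hA.spectral_theorem]
    rw [Unitary.conjStarAlgAut_apply, trace_mul_cycle, Unitary.coe_star_mul_self, one_mul, trace_diagonal]
    simp
  rw [h]
  simp

lemma trace_re_nonneg {k : ℕ} {A : Matrix (Fin k) (Fin k) ℂ} (hA : A.PosSemidef) :
    0 ≤ A.trace.re := by
  rw [trace_re_eq hA.isHermitian]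
  exact Finset.sum_nonneg fun i _ => hA.eigenvalues_nonneg i

lemma det_re_eq {k : ℕ} {A : Matrix (Fin k) (Fin k) ℂ} (hA : A.IsHermitian) :
    A.det.re = ∏ i, hA.eigenvalues i := by
  rw [hA.det_eq_prod_eigenvalues]
  norm_cast

lemma log_det_le {k : ℕ} {A : Matrix (Fin k) (Fin k) ℂ} (hA : A.PosDef) :
    Real.log A.det.re ≤ A.trace.re - k := by
  rw [det_re_eq hA.isHermitian, trace_re_eq hA.isHermitian,
      Real.log_prod (fun i _ => (hA.eigenvalues_pos i).ne')]
  calc ∑ i, Real.log (hA.isHermitian.eigenvalues i)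
      ≤ ∑ i, (hA.isHermitian.eigenvalues i - 1) :=
        Finset.sum_le_sum fun i _ => Real.log_le_sub_one_of_pos (hA.eigenvalues_pos i)
    _ = _ := by rw [Finset.sum_sub_distrib]; simp

lemma key {k : ℕ} {H K : Matrix (Fin k) (Fin k) ℂ} (hH : H.PosDef) (hK : K.PosDef) :
    Real.log H.det.re + Real.log K.det.re ≤ (H * K).trace.re - k := by
  set S := CFC.sqrt H with hSdef
  have hSH : Sᴴ = S := (CFC.sqrt_nonneg H).posSemidef.isHermitian
  have hSS : S * S = H := CFC.sqrt_mul_sqrt_self H hH.posSemidef.nonneg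
  have hdetS : S.det * S.det = H.det := by rw [← det_mul, hSS]
  have hdS : S.det ≠ 0 := by
    intro h
    exact hH.det_pos.ne' (by rw [← hdetS, h, mul_zero])
  have hSinj : Function.Injective S.mulVec :=
    mulVec_injective_iff_isUnit.2 ((isUnit_iff_isUnit_det S).2 hdS.isUnit)
  have hY : (S * K * S).PosDef := by
    have := posDef_conj hK S hSinj
    rwa [hSH] at this
  have htr : (S * K * S).trace = (H * K).trace := by
    rw [trace_mul_cycle, hSS]
  -- determinants
  obtain ⟨hHre, hHim⟩ := Complex.pos_iff.mp hH.det_pos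
  obtain ⟨hKre, hKim⟩ := Complex.pos_iff.mp hK.det_pos
  have hdet : (S * K * S).det.re = H.det.re * K.det.re := by
    rw [det_mul, det_mul]
    have : S.det * K.det * S.det = H.det * K.det := by
      rw [mul_comm S.det K.det, mul_assoc, hdetS, mul_comm]
    rw [this, Complex.mul_re, ← hHim, ← hKim]
    ring
  have hlog : Real.log (S * K * S).det.re = Real.log H.det.re + Real.log K.det.re := by
    rw [hdet, Real.log_mul hHre.ne' hKre.ne']
  have := log_det_le hY
  rw [hlog, htr] at this
  exact this


lemma trace_mul_re_nonneg {k : ℕ} {A N : Matrix (Fin k) (Fin k) ℂ}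
    (hA : A.PosDef) (hN : N.PosSemidef) : 0 ≤ (A * N).trace.re := by
  set S := CFC.sqrt A with hSdef
  have hSH : Sᴴ = S := (CFC.sqrt_nonneg A).posSemidef.isHermitian
  have hSS : S * S = A := CFC.sqrt_mul_sqrt_self A hA.posSemidef.nonneg
  have h1 : (A * N).trace = (S * N * S).trace := by
    rw [← hSS, mul_assoc, trace_mul_comm]
  have h2 : (S * N * S).PosSemidef := by
    have := hN.conjTranspose_mul_mul_same S
    rwa [hSH] at this
  rw [h1]
  exact trace_re_nonneg h2

end Stmt6Aux

/-- Minorization inequality of Lemma 2: with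
`G = C_k⁻¹ E (Eᴴ C_k⁻¹ E)⁻¹ Eᴴ C_k⁻¹`, we have
`log (Re det (Eᴴ C⁻¹ E)) ≥ log (Re det (Eᴴ C_k⁻¹ E)) − Re (Tr (G (C − C_k)))`. -/
theorem stmt_6 (m n : ℕ) (E : Matrix (Fin m) (Fin n) ℂ)
    (hE : Function.Injective E.mulVec)
    (C Ck : Matrix (Fin m) (Fin m) ℂ) (hC : C.PosDef) (hCk : Ck.PosDef)
    (G : Matrix (Fin m) (Fin m) ℂ)
    (hG : G = Ck⁻¹ * E * (Eᴴ * Ck⁻¹ * E)⁻¹ * Eᴴ * Ck⁻¹) :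
    Real.log ((Eᴴ * C⁻¹ * E).det.re)
      ≥ Real.log ((Eᴴ * Ck⁻¹ * E).det.re) - ((G * (C - Ck)).trace).re := by
  have hCki : (Ck⁻¹).PosDef := hCk.inv
  have hCi : (C⁻¹).PosDef := hC.inv
  set A := Eᴴ * Ck⁻¹ * E with hAdef
  set P := Eᴴ * C⁻¹ * E with hPdef
  have hA : A.PosDef := Stmt6Aux.posDef_conj hCki E hE
  have hP : P.PosDef := Stmt6Aux.posDef_conj hCi E hE
  have hAd : IsUnit A.det := hA.det_pos.ne'.isUnit
  have hPd : IsUnit P.det := hP.det_pos.ne'.isUnit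
  have hCd : IsUnit C.det := hC.det_pos.ne'.isUnit
  have hCkd : IsUnit Ck.det := hCk.det_pos.ne'.isUnit
  have hCH : (C⁻¹)ᴴ = C⁻¹ := hCi.isHermitian
  have hCkH : (Ck⁻¹)ᴴ = Ck⁻¹ := hCki.isHermitian
  have hAH : (A⁻¹)ᴴ = A⁻¹ := hA.inv.isHermitian
  have hPH : (P⁻¹)ᴴ = P⁻¹ := hP.inv.isHermitian
  set Tk := Ck⁻¹ * E * A⁻¹ with hTkdef
  have hTkH : Tkᴴ = A⁻¹ * (Eᴴ * Ck⁻¹) := by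
    rw [hTkdef]
    simp [conjTranspose_mul, hCkH, hAH, Matrix.mul_assoc]
  -- cancellation helpers (right-associated forms)
  have c1 : ∀ {p : ℕ} (X : Matrix (Fin m) (Fin p) ℂ), C * (C⁻¹ * X) = X :=
    fun X => mul_nonsing_inv_cancel_left _ X hCd
  have c2 : ∀ {p : ℕ} (X : Matrix (Fin m) (Fin p) ℂ), C⁻¹ * (C * X) = X :=
    fun X => nonsing_inv_mul_cancel_left _ X hCd
  have ck2 : ∀ {p : ℕ} (X : Matrix (Fin m) (Fin p) ℂ), Ck⁻¹ * (Ck * X) = X :=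
    fun X => nonsing_inv_mul_cancel_left _ X hCkd
  have a2 : ∀ {p : ℕ} (X : Matrix (Fin n) (Fin p) ℂ), A⁻¹ * (A * X) = X :=
    fun X => nonsing_inv_mul_cancel_left _ X hAd
  have a1 : ∀ {p : ℕ} (X : Matrix (Fin n) (Fin p) ℂ), A * (A⁻¹ * X) = X :=
    fun X => mul_nonsing_inv_cancel_left _ X hAd
  have p2 : ∀ {p : ℕ} (X : Matrix (Fin n) (Fin p) ℂ), P⁻¹ * (P * X) = X :=
    fun X => nonsing_inv_mul_cancel_left _ X hPd
  have cancA : ∀ {p : ℕ} (X : Matrix (Fin n) (Fin p) ℂ),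
      Eᴴ * (Ck⁻¹ * (E * X)) = A * X := by
    intro p X; rw [hAdef]; simp only [Matrix.mul_assoc]
  have cancP : ∀ {p : ℕ} (X : Matrix (Fin n) (Fin p) ℂ),
      Eᴴ * (C⁻¹ * (E * X)) = P * X := by
    intro p X; rw [hPdef]; simp only [Matrix.mul_assoc]
  have hETk : Eᴴ * Tk = 1 := by
    rw [hTkdef, ← Matrix.mul_assoc, ← Matrix.mul_assoc, ← hAdef, mul_nonsing_inv _ hAd]
  have cancTkE : ∀ {p : ℕ} (X : Matrix (Fin n) (Fin p) ℂ),
      Tkᴴ * (E * X) = X := by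
    intro p X
    rw [hTkH, Matrix.mul_assoc, Matrix.mul_assoc, cancA, a2]
  have hTkCkTk : Tkᴴ * (Ck * Tk) = A⁻¹ := by
    rw [hTkH, hTkdef]
    simp only [Matrix.mul_assoc]
    rw [ck2, cancA, a2]
  have hGT : G = Tk * (A * Tkᴴ) := by
    rw [hG, hTkH, a1]
    simp only [Matrix.mul_assoc]
  -- the Cauchy-Schwarz / Schur-complement step
  set M := Tk - C⁻¹ * (E * P⁻¹) with hMdef
  have hMH : Mᴴ = Tkᴴ - P⁻¹ * (Eᴴ * C⁻¹) := by
    rw [hMdef]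
    simp [conjTranspose_sub, conjTranspose_mul, hCH, hPH, Matrix.mul_assoc]
  have hMCM : Mᴴ * C * M = Tkᴴ * (C * Tk) - P⁻¹ := by
    rw [hMH, hMdef]
    simp only [Matrix.sub_mul, Matrix.mul_sub, Matrix.mul_assoc, c1, c2, cancTkE,
      cancP, hETk, p2, Matrix.mul_one, sub_self, sub_zero]
  have hPSD : (Tkᴴ * (C * Tk) - P⁻¹).PosSemidef := by
    rw [← hMCM]; exact hC.posSemidef.conjTranspose_mul_mul_same M
  -- trace identities
  have htrC : (G * C).trace = (A * (Tkᴴ * (C * Tk))).trace := by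
    rw [hGT]
    simp only [Matrix.mul_assoc]
    rw [trace_mul_comm]
    simp only [Matrix.mul_assoc]
  have htrCk : (G * Ck).trace = (n : ℂ) := by
    rw [hGT]
    simp only [Matrix.mul_assoc]
    rw [trace_mul_comm]
    simp only [Matrix.mul_assoc]
    rw [hTkCkTk, mul_nonsing_inv _ hAd, trace_one]
    simp
  have htr : (G * (C - Ck)).trace.re = (A * (Tkᴴ * (C * Tk))).trace.re - n := by
    rw [Matrix.mul_sub, trace_sub, htrC, htrCk, Complex.sub_re, Complex.natCast_re]
  -- trace monotonicity
  have hmono : (A * P⁻¹).trace.re ≤ (A * (Tkᴴ * (C * Tk))).trace.re := by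
    have h0 := Stmt6Aux.trace_mul_re_nonneg hA hPSD
    rw [Matrix.mul_sub, trace_sub, Complex.sub_re] at h0
    linarith
  -- key inequality with H = A, K = P⁻¹
  have hkey := Stmt6Aux.key hA hP.inv
  have hdetPinv : (P⁻¹).det.re = (P.det.re)⁻¹ := by
    obtain ⟨hre, him⟩ := Complex.pos_iff.mp hP.det_pos
    have hPdet : P.det = (P.det.re : ℂ) := Complex.ext rfl (by simp [← him])
    rw [det_nonsing_inv, Ring.inverse_eq_inv', hPdet, ← Complex.ofReal_inv,
      Complex.ofReal_re]
    simp
  rw [hdetPinv, Real.log_inv] at hkey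
  rw [ge_iff_le, htr]
  linarith
end

section
/- Let n, N be positive integers, u ∈ {1,…,n}, h ∈ ℂ^N a channel vector, t : {1,…,n} → ℂ^N beamforming vectors, σ² > 0, and Γ ∈ ℝ. Write a_v = hᴴ t_v, define SINR = |a_u|² / (Σ_{v ≠ u} |a_v|² + σ²), and for δ ∈ ℂ define the mean-square error f(δ) = |1 − δ·a_u|² + Σ_{v ≠ u} |δ·a_v|² + |δ|²·σ². Then log(1 + SINR) ≥ Γ if and only if there exist a real w > 0 and δ ∈ ℂ such that −w·f(δ) + log w + 1 ≥ Γ. -/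
open scoped Matrix

/-- Theorem 1 of the paper: the rate QoS constraint `log(1 + SINR_u) ≥ Γ` is
equivalent to the WMMSE constraint `∃ w > 0, ∃ δ, −w f(δ) + log w + 1 ≥ Γ`,
where `a_v = hᴴ t_v` and `f(δ)` is the mean-square error of user `u`. -/
theorem stmt_11 (n N : ℕ) (hn : 0 < n) (hN : 0 < N) (u : Fin n)
    (h : Fin N → ℂ) (t : Fin n → Fin N → ℂ)
    (σ2 : ℝ) (hσ : 0 < σ2) (Γ : ℝ)
    (a : Fin n → ℂ) (ha : ∀ v, a v = star h ⬝ᵥ t v)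
    (SINR : ℝ)
    (hSINR : SINR = ‖a u‖ ^ 2
      / ((∑ v ∈ Finset.univ.erase u, ‖a v‖ ^ 2) + σ2))
    (f : ℂ → ℝ)
    (hf : ∀ δ : ℂ, f δ = ‖1 - δ * a u‖ ^ 2
      + ∑ v ∈ Finset.univ.erase u, ‖δ * a v‖ ^ 2
      + ‖δ‖ ^ 2 * σ2) :
    Real.log (1 + SINR) ≥ Γ ↔
      ∃ w : ℝ, 0 < w ∧ ∃ δ : ℂ, -w * f δ + Real.log w + 1 ≥ Γ := by
  classical
  set I : ℝ := ∑ v ∈ Finset.univ.erase u, ‖a v‖ ^ 2 with hIdef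
  have hI0 : 0 ≤ I := Finset.sum_nonneg (fun v _ => by positivity)
  set T : ℝ := I + σ2 with hTdef
  have hT0 : 0 < T := by linarith
  set p : ℝ := (a u).re with hp
  set q : ℝ := (a u).im with hq
  set A : ℝ := ‖a u‖ ^ 2 with hAdef
  have hApq : A = p ^ 2 + q ^ 2 := by
    rw [hAdef, Complex.sq_norm, Complex.normSq_apply, hp, hq]; ring
  have hA0 : 0 ≤ A := by positivity
  have hAT0 : 0 < A + T := by linarith
  have hpqT0 : 0 < p ^ 2 + q ^ 2 + T := by rw [← hApq]; exact hAT0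
  -- f in terms of components
  have hfc : ∀ δ : ℂ, f δ = (1 - (δ.re * p - δ.im * q)) ^ 2
      + (δ.re * q + δ.im * p) ^ 2 + (δ.re ^ 2 + δ.im ^ 2) * T := by
    intro δ
    have hsum : ∑ v ∈ Finset.univ.erase u, ‖δ * a v‖ ^ 2
        = (δ.re ^ 2 + δ.im ^ 2) * I := by
      rw [hIdef, Finset.mul_sum]
      refine Finset.sum_congr rfl (fun v _ => ?_)
      rw [norm_mul, mul_pow, Complex.sq_norm δ, Complex.normSq_apply]
      ring
    rw [hf, hsum, Complex.sq_norm, Complex.normSq_apply, Complex.sq_norm,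
      Complex.normSq_apply, hTdef]
    simp only [Complex.sub_re, Complex.sub_im, Complex.mul_re, Complex.mul_im,
      Complex.one_re, Complex.one_im, ← hp, ← hq]
    ring
  have hSINR' : 1 + SINR = (A + T) / T := by
    rw [hSINR]
    field_simp
    ring
  have hfkey : ∀ δ : ℂ, T / (A + T) ≤ f δ := by
    intro δ
    rw [div_le_iff₀ hAT0, hfc δ, hApq]
    nlinarith [sq_nonneg ((p ^ 2 + q ^ 2 + T) * δ.re - p),
      sq_nonneg ((p ^ 2 + q ^ 2 + T) * δ.im + q)]
  have hlog : Real.log (1 + SINR) = Real.log ((A + T) / T) := by rw [hSINR']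
  constructor
  · intro hΓ
    have hδ0 : ∃ δ0 : ℂ, δ0.re = p / (A + T) ∧ δ0.im = -(q / (A + T)) :=
      ⟨⟨p / (A + T), -(q / (A + T))⟩, rfl, rfl⟩
    obtain ⟨δ0, hre, him⟩ := hδ0
    refine ⟨(A + T) / T, div_pos hAT0 hT0, δ0, ?_⟩
    have hfval : f δ0 = T / (A + T) := by
      rw [hfc δ0, hre, him, hApq]
      field_simp
      ring
    rw [hfval]
    have he : -((A + T) / T) * (T / (A + T)) = -1 := by
      field_simp
    rw [he, ← hlog]
    linarith
  · rintro ⟨w, hw, δ, hδ⟩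
    have hf0 : 0 < f δ := lt_of_lt_of_le (div_pos hT0 hAT0) (hfkey δ)
    have h1 : Real.log (w * f δ) ≤ w * f δ - 1 :=
      Real.log_le_sub_one_of_pos (mul_pos hw hf0)
    rw [Real.log_mul (ne_of_gt hw) (ne_of_gt hf0)] at h1
    have h2 : Real.log (T / (A + T)) ≤ Real.log (f δ) :=
      Real.log_le_log (div_pos hT0 hAT0) (hfkey δ)
    rw [Real.log_div (ne_of_gt hT0) (ne_of_gt hAT0)] at h2
    rw [hlog, Real.log_div (ne_of_gt hAT0) (ne_of_gt hT0)]
    linarith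
end

section
/- Let c > 0 be a real number and m ∈ ℂ a nonzero complex number. Define f(x) = c·|x|² − 2·Re(x·m) for x ∈ ℂ, and let x* = conj(m)/c if |m| ≤ 2c and x* = 2·conj(m)/|m| otherwise. Then |x*| ≤ 2 and for every x ∈ ℂ with |x| ≤ 2, f(x*) ≤ f(x). -/
/-- Closed-form analog beamformer entry under the double-phase-shifter magnitude
constraint: `x* = conj(m)/c` if `|m| ≤ 2c` and `x* = 2 conj(m)/|m|` otherwise
minimizes `f(x) = c|x|² − 2 Re(x m)` over `{x : |x| ≤ 2}`. -/
theorem stmt_14 (c : ℝ) (hc : 0 < c) (m : ℂ) (hm : m ≠ 0)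
    (f : ℂ → ℝ) (hf : ∀ x : ℂ, f x = c * ‖x‖ ^ 2 - 2 * (x * m).re)
    (xstar : ℂ)
    (hx : xstar = if ‖m‖ ≤ 2 * c then (starRingEnd ℂ) m / (c : ℂ)
      else 2 * (starRingEnd ℂ) m / (‖m‖ : ℂ)) :
    ‖xstar‖ ≤ 2 ∧
    ∀ x : ℂ, ‖x‖ ≤ 2 → f xstar ≤ f x := by
  have hM : 0 < ‖m‖ := norm_pos_iff.mpr hm
  set M := ‖m‖ with hMdef
  have hre : ∀ x : ℂ, (x * m).re ≤ ‖x‖ * M := by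
    intro x
    calc (x * m).re ≤ ‖x * m‖ := Complex.re_le_norm _
      _ = ‖x‖ * M := by rw [norm_mul]
  by_cases hcase : M ≤ 2 * c
  · rw [if_pos hcase] at hx
    have hmul : (starRingEnd ℂ) m / (c : ℂ) * m = ((M ^ 2 / c : ℝ) : ℂ) := by
      rw [div_mul_eq_mul_div, mul_comm, Complex.mul_conj, Complex.normSq_eq_norm_sq]
      push_cast
      ring
    have habs : ‖xstar‖ = M / c := by
      rw [hx, norm_div, Complex.norm_conj, Complex.norm_real, Real.norm_eq_abs, abs_of_pos hc]
    have hfstar : f xstar = -(M ^ 2 / c) := by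
      rw [hf, habs, hx, hmul, Complex.ofReal_re]
      field_simp
      ring
    constructor
    · rw [habs]
      rw [div_le_iff₀ hc]
      linarith
    · intro x hxle
      rw [hfstar, hf]
      have h1 := hre x
      have h2 : 0 ≤ c * (‖x‖ - M / c) ^ 2 := by positivity
      have hax : 0 ≤ ‖x‖ := norm_nonneg x
      have key : c * ‖x‖ ^ 2 - 2 * (‖x‖ * M) + M ^ 2 / c
          = c * (‖x‖ - M / c) ^ 2 := by
        field_simp
        ring
      linarith [h1, h2, key]
  · rw [if_neg hcase] at hx
    push_neg at hcase
    have hMne : (M : ℂ) ≠ 0 := by exact_mod_cast hM.ne'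
    have hmul : 2 * (starRingEnd ℂ) m / (M : ℂ) * m = ((2 * M : ℝ) : ℂ) := by
      rw [div_mul_eq_mul_div, mul_assoc, mul_comm ((starRingEnd ℂ) m) m,
        Complex.mul_conj, Complex.normSq_eq_norm_sq]
      rw [div_eq_iff hMne]
      push_cast
      ring
    have habs : ‖xstar‖ = 2 := by
      rw [hx, norm_div, norm_mul, Complex.norm_conj, Complex.norm_real, Real.norm_eq_abs,
        abs_of_pos hM, Complex.norm_two]
      field_simp
      exact hMdef.symm
    have hfstar : f xstar = 4 * c - 4 * M := by
      rw [hf, habs, hx, hmul, Complex.ofReal_re]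
      ring
    refine ⟨le_of_eq habs, ?_⟩
    intro x hxle
    rw [hfstar, hf]
    have h1 := hre x
    have hax : 0 ≤ ‖x‖ := norm_nonneg x
    nlinarith [mul_nonneg (sub_nonneg.2 hxle) (by nlinarith : (0:ℝ) ≤ 2 * M - c * (‖x‖ + 2))]
end
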